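/- Let n, m, k, ℓ be positive integers with ℓ ≤ k and ℓ ≤ m, and let p ∈ [0,1] be real with p^ℓ < ℓ/k. Under the Erdős–Rényi model with parameter p on n voters and m candidates, the probability that there exists a set L ⊆ {1,…,m} with |L| = ℓ such that the number of voters v with L ⊆ A(v) is at least ℓ·n/k is at most C(m,ℓ)·exp(−2·(ℓ/k − p^ℓ)²·n). -/

import Mathlib

open Finset

lemma bern_pos (q : ℝ) (hq0 : 0 ≤ q) (hq1 : q ≤ 1) (s : ℝ) :
    0 < 1 - q + q * Real.exp s := by
  rcases eq_or_lt_of_le hq0 with h | h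
  · simp [← h]
  · nlinarith [Real.exp_pos s, mul_pos h (Real.exp_pos s)]

lemma bern_mgf (q s : ℝ) (hq0 : 0 ≤ q) (hq1 : q ≤ 1) (hs : 0 ≤ s) :
    1 - q + q * Real.exp s ≤ Real.exp (q * s + s ^ 2 / 8) := by
  set h : ℝ → ℝ := fun x => 1 - q + q * Real.exp x with hh_def
  have hpos : ∀ x, 0 < h x := fun x => bern_pos q hq0 hq1 x
  have hne : ∀ x, h x ≠ 0 := fun x => (hpos x).ne'
  have hdh : ∀ x, HasDerivAt h (q * Real.exp x) x := fun x =>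
    ((Real.hasDerivAt_exp x).const_mul q).const_add (1 - q)
  set φ : ℝ → ℝ := fun x => q + x / 4 - q * Real.exp x / h x with hφ_def
  set g : ℝ → ℝ := fun x => q * x + x ^ 2 / 8 - Real.log (h x) with hg_def
  have hdg : ∀ x, HasDerivAt g (φ x) x := by
    intro x
    have h1 : HasDerivAt (fun x : ℝ => q * x) q x := by
      simpa using (hasDerivAt_id x).const_mul q
    have h2 : HasDerivAt (fun x : ℝ => x ^ 2 / 8) (x / 4) x := by
      have := (hasDerivAt_pow 2 x).div_const 8
      refine this.congr_deriv ?_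
      norm_num
      ring
    have h3 : HasDerivAt (fun x => Real.log (h x)) (q * Real.exp x / h x) x :=
      (hdh x).log (hne x)
    exact (h1.add h2).sub h3
  have hdφ : ∀ x, HasDerivAt φ
      (1 / 4 - (q * Real.exp x * h x - q * Real.exp x * (q * Real.exp x)) / h x ^ 2) x := by
    intro x
    have h1 : HasDerivAt (fun x : ℝ => q + x / 4) (1 / 4) x := by
      simpa using ((hasDerivAt_id x).div_const 4).const_add q
    have h2 : HasDerivAt (fun x => q * Real.exp x / h x)
        ((q * Real.exp x * h x - q * Real.exp x * (q * Real.exp x)) / h x ^ 2) x :=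
      ((Real.hasDerivAt_exp x).const_mul q).div (hdh x) (hne x)
    exact h1.sub h2
  have hψ : ∀ x, 0 ≤ 1 / 4 - (q * Real.exp x * h x - q * Real.exp x * (q * Real.exp x)) / h x ^ 2 := by
    intro x
    rw [sub_nonneg, div_le_iff₀ (pow_pos (hpos x) 2)]
    have hx := Real.exp_pos x
    simp only [hh_def]
    nlinarith [sq_nonneg (1 - q - q * Real.exp x)]
  have hφmono : Monotone φ := by
    apply monotone_of_deriv_nonneg (fun x => (hdφ x).differentiableAt)
    intro x
    rw [(hdφ x).deriv]
    exact hψ x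
  have hφ0 : φ 0 = 0 := by
    simp only [hφ_def, hh_def, Real.exp_zero, mul_one]
    have : 1 - q + q = 1 := by ring
    rw [this]
    ring
  have hφnonneg : ∀ x, 0 ≤ x → 0 ≤ φ x := by
    intro x hx
    rw [← hφ0]
    exact hφmono hx
  have hgmono : MonotoneOn g (Set.Ici 0) := by
    apply monotoneOn_of_deriv_nonneg (convex_Ici 0)
    · exact fun x _ => ((hdg x).differentiableAt).continuousAt.continuousWithinAt
    · exact fun x _ => ((hdg x).differentiableAt).differentiableWithinAt
    · intro x hx
      rw [(hdg x).deriv]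
      exact hφnonneg x (le_of_lt (by simpa using hx))
  have hg0 : g 0 = 0 := by
    simp only [hg_def, hh_def, Real.exp_zero, mul_one, mul_zero]
    have : 1 - q + q = 1 := by ring
    rw [this]
    simp
  have hgs : 0 ≤ g s := by
    rw [← hg0]
    exact hgmono (Set.self_mem_Ici) (Set.mem_Ici.mpr hs) hs
  have hlog : Real.log (h s) ≤ q * s + s ^ 2 / 8 := by
    simp only [hg_def] at hgs; linarith
  calc 1 - q + q * Real.exp s = Real.exp (Real.log (h s)) := (Real.exp_log (hpos s)).symm
    _ ≤ Real.exp (q * s + s ^ 2 / 8) := Real.exp_le_exp.mpr hlog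

lemma sum_w_powerset {α : Type*} [DecidableEq α] (s : Finset α) (p : ℝ) :
    ∑ T ∈ s.powerset, p ^ T.card * (1 - p) ^ (s.card - T.card) = 1 := by
  have h := Finset.prod_add (fun _ : α => p) (fun _ => 1 - p) s
  simp only [add_sub_cancel, prod_const_one, prod_const] at h
  conv_rhs => rw [h]
  apply Finset.sum_congr rfl
  intro T hT
  rw [Finset.card_sdiff_of_subset (Finset.mem_powerset.mp hT)]

lemma sum_w_univ (m : ℕ) (p : ℝ) :
    ∑ S : Finset (Fin m), p ^ S.card * (1 - p) ^ (m - S.card) = 1 := by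
  have h := sum_w_powerset (univ : Finset (Fin m)) p
  simpa using h

lemma sum_w_superset (m ℓ : ℕ) (p : ℝ) (L : Finset (Fin m)) (hL : L.card = ℓ) :
    ∑ S ∈ univ.filter (fun S => L ⊆ S), p ^ S.card * (1 - p) ^ (m - S.card) = p ^ ℓ := by
  have key : ∑ S ∈ univ.filter (fun S => L ⊆ S), p ^ S.card * (1 - p) ^ (m - S.card)
      = ∑ T ∈ (univ \ L).powerset, p ^ ℓ * (p ^ T.card * (1 - p) ^ ((m - ℓ) - T.card)) := by
    apply Finset.sum_nbij' (fun S => S \ L) (fun T => L ∪ T)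
    · intro S hS
      simp only [Finset.mem_filter, Finset.mem_univ, true_and] at hS
      exact Finset.mem_powerset.mpr (Finset.sdiff_subset_sdiff (Finset.subset_univ S) le_rfl)
    · intro T hT
      simp [Finset.subset_union_left]
    · intro S hS
      simp only [Finset.mem_filter, Finset.mem_univ, true_and] at hS
      exact Finset.union_sdiff_of_subset hS
    · intro T hT
      have hdis : Disjoint T L := by
        have := Finset.mem_powerset.mp hT
        exact Finset.disjoint_left.mpr fun a haT => (Finset.mem_sdiff.mp (this haT)).2
      rw [Finset.union_sdiff_cancel_left hdis.symm]
    · intro S hS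
      simp only [Finset.mem_filter, Finset.mem_univ, true_and] at hS
      have hSm : S.card ≤ m := by
        simpa using Finset.card_le_card (Finset.subset_univ S)
      have hℓS : ℓ ≤ S.card := hL ▸ Finset.card_le_card hS
      have hcard : (S \ L).card = S.card - ℓ := by rw [Finset.card_sdiff_of_subset hS, hL]
      have e1 : m - ℓ - (S.card - ℓ) = m - S.card := by omega
      have e2 : ℓ + (S.card - ℓ) = S.card := by omega
      rw [hcard, e1, ← mul_assoc, ← pow_add, e2]
  rw [key, ← Finset.mul_sum]
  have : (univ \ L).card = m - ℓ := by
    rw [Finset.card_sdiff_of_subset (Finset.subset_univ L), hL, Finset.card_univ, Fintype.card_fin]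
  have hsum := sum_w_powerset (univ \ L) p
  rw [this] at hsum
  rw [hsum, mul_one]

lemma chernoff_L (n m k ℓ : ℕ) (p : ℝ) (hp0 : 0 ≤ p) (hp1 : p ≤ 1)
    (hpl : p ^ ℓ ≤ (ℓ : ℝ) / k)
    (L : Finset (Fin m)) (hL : L.card = ℓ) :
    ∑ A : Fin n → Finset (Fin m),
      Set.indicator {A : Fin n → Finset (Fin m) |
          (ℓ : ℝ) * n / k ≤ ((univ.filter fun v => L ⊆ A v).card : ℝ)}
        (fun B => ∏ v, p ^ (B v).card * (1 - p) ^ (m - (B v).card)) A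
      ≤ Real.exp (-2 * ((ℓ : ℝ) / k - p ^ ℓ) ^ 2 * n) := by
  set q : ℝ := p ^ ℓ with hq_def
  set t : ℝ := (ℓ : ℝ) / k with ht_def
  set s : ℝ := 4 * (t - q) with hs_def
  have hs : 0 ≤ s := by simp only [hs_def]; linarith
  have hq0 : 0 ≤ q := pow_nonneg hp0 ℓ
  have hq1 : q ≤ 1 := pow_le_one₀ hp0 hp1
  set w : Finset (Fin m) → ℝ := fun S => p ^ S.card * (1 - p) ^ (m - S.card) with hw_def
  have hwnn : ∀ S, 0 ≤ w S := by
    intro S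
    have h1 : (0:ℝ) ≤ 1 - p := by linarith
    positivity
  set f : Finset (Fin m) → ℝ := fun S => w S * (if L ⊆ S then Real.exp s else 1) with hf_def
  have hfnn : ∀ S, 0 ≤ f S := by
    intro S
    apply mul_nonneg (hwnn S)
    split <;> positivity
  -- pointwise Chernoff bound
  have hpoint : ∀ A : Fin n → Finset (Fin m),
      Set.indicator {A : Fin n → Finset (Fin m) |
          (ℓ : ℝ) * n / k ≤ ((univ.filter fun v => L ⊆ A v).card : ℝ)}
        (fun B => ∏ v, w (B v)) A
      ≤ Real.exp (-(s * t * n)) * ∏ v, f (A v) := by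
    intro A
    have hprodf : ∏ v, f (A v)
        = (∏ v, w (A v)) * Real.exp s ^ ((univ.filter fun v => L ⊆ A v).card) := by
      rw [Finset.prod_mul_distrib]
      congr 1
      rw [Finset.prod_ite, Finset.prod_const, Finset.prod_const, one_pow, mul_one]
    by_cases hA : (ℓ : ℝ) * n / k ≤ ((univ.filter fun v => L ⊆ A v).card : ℝ)
    · rw [Set.indicator_apply, if_pos (show A ∈ _ from hA)]
      rw [hprodf]
      set N : ℝ := ((univ.filter fun v => L ⊆ A v).card : ℝ)
      have hexp : Real.exp s ^ ((univ.filter fun v => L ⊆ A v).card) = Real.exp (s * N) := by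
        rw [← Real.exp_nat_mul, mul_comm]
      rw [hexp]
      have hWnn : 0 ≤ ∏ v, w (A v) := Finset.prod_nonneg fun v _ => hwnn (A v)
      have htn : t * n ≤ N := by
        simp only [ht_def]
        calc (ℓ:ℝ)/k * n = (ℓ:ℝ) * n / k := by ring
        _ ≤ N := hA
      have h1 : (1:ℝ) ≤ Real.exp (-(s * t * n)) * Real.exp (s * N) := by
        rw [← Real.exp_add]
        apply Real.one_le_exp
        nlinarith
      calc (∏ v, w (A v)) = (∏ v, w (A v)) * 1 := by ring
        _ ≤ (∏ v, w (A v)) * (Real.exp (-(s * t * n)) * Real.exp (s * N)) :=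
            mul_le_mul_of_nonneg_left h1 hWnn
        _ = Real.exp (-(s * t * n)) * ((∏ v, w (A v)) * Real.exp (s * N)) := by ring
    · rw [Set.indicator_apply, if_neg (show A ∉ _ from hA)]
      apply mul_nonneg (Real.exp_nonneg _)
      exact Finset.prod_nonneg fun v _ => hfnn (A v)
  -- sum the bound
  have hsum : ∑ A : Fin n → Finset (Fin m), ∏ v, f (A v) = (∑ S : Finset (Fin m), f S) ^ n := by
    have h : ∏ _i : Fin n, ∑ S : Finset (Fin m), f S
        = ∑ A : Fin n → Finset (Fin m), ∏ v, f (A v) := Fintype.prod_sum _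
    rw [← h, Finset.prod_const, Finset.card_univ, Fintype.card_fin]
  have hfS : ∑ S : Finset (Fin m), f S = 1 - q + q * Real.exp s := by
    simp only [hf_def, mul_ite, mul_one]
    rw [Finset.sum_ite]
    have h1 : ∑ S ∈ univ.filter (fun S => L ⊆ S), w S * Real.exp s = q * Real.exp s := by
      rw [← Finset.sum_mul, sum_w_superset m ℓ p L hL]
    have h2 : ∑ S ∈ univ.filter (fun S => ¬ L ⊆ S), w S = 1 - q := by
      have := Finset.sum_filter_add_sum_filter_not univ (fun S => L ⊆ S) w
      rw [sum_w_univ m p] at this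
      have h3 := sum_w_superset m ℓ p L hL
      simp only [hw_def] at *
      linarith
    rw [h1, h2]
    ring
  calc ∑ A : Fin n → Finset (Fin m), Set.indicator _ (fun B => ∏ v, w (B v)) A
      ≤ ∑ A : Fin n → Finset (Fin m), Real.exp (-(s * t * n)) * ∏ v, f (A v) :=
        Finset.sum_le_sum fun A _ => hpoint A
    _ = Real.exp (-(s * t * n)) * (1 - q + q * Real.exp s) ^ n := by
        rw [← Finset.mul_sum, hsum, hfS]
    _ ≤ Real.exp (-(s * t * n)) * (Real.exp (q * s + s ^ 2 / 8)) ^ n := by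
        apply mul_le_mul_of_nonneg_left _ (Real.exp_nonneg _)
        apply pow_le_pow_left₀ _ (bern_mgf q s hq0 hq1 hs)
        have := Real.exp_pos s
        nlinarith
    _ = Real.exp (-2 * (t - q) ^ 2 * n) := by
        rw [← Real.exp_nat_mul, ← Real.exp_add]
        congr 1
        simp only [hs_def]
        ring

/-- Probability of an event `E` on approval profiles with `n` voters and `m` candidates
under the Erdős–Rényi model with parameter `p`: each voter's ballot is drawn
independently, a subset `S` of the candidates having probability
`p ^ |S| * (1-p) ^ (m - |S|)`. -/
noncomputable def erProb (n m : ℕ) (p : ℝ) (E : Set (Fin n → Finset (Fin m))) : ℝ :=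
  ∑ A : Fin n → Finset (Fin m),
    Set.indicator E
      (fun B => ∏ v, p ^ (B v).card * (1 - p) ^ (m - (B v).card)) A

theorem cohesive_group_unlikely (n m k ℓ : ℕ) (hn : 1 ≤ n) (hm : 1 ≤ m)
    (hk : 1 ≤ k) (hℓ : 1 ≤ ℓ) (hℓk : ℓ ≤ k) (hℓm : ℓ ≤ m)
    (p : ℝ) (hp : p ∈ Set.Icc (0:ℝ) 1) (hpl : p ^ ℓ < (ℓ:ℝ) / (k:ℝ)) :
    erProb n m p
        {A | ∃ L : Finset (Fin m), L.card = ℓ ∧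
          (ℓ:ℝ) * (n:ℝ) / (k:ℝ) ≤ ((Finset.univ.filter fun v => L ⊆ A v).card : ℝ)}
      ≤ (Nat.choose m ℓ : ℝ) * Real.exp (-2 * ((ℓ:ℝ) / (k:ℝ) - p ^ ℓ) ^ 2 * (n:ℝ)) := by
  obtain ⟨hp0, hp1⟩ := hp
  set W : (Fin n → Finset (Fin m)) → ℝ :=
    fun B => ∏ v, p ^ (B v).card * (1 - p) ^ (m - (B v).card) with hW_def
  have hWnn : ∀ B, 0 ≤ W B := by
    intro B
    apply Finset.prod_nonneg
    intro v _
    have : (0:ℝ) ≤ 1 - p := by linarith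
    positivity
  set EL : Finset (Fin m) → Set (Fin n → Finset (Fin m)) :=
    fun L => {A | (ℓ:ℝ) * (n:ℝ) / (k:ℝ) ≤ ((Finset.univ.filter fun v => L ⊆ A v).card : ℝ)}
    with hEL_def
  -- pointwise union bound
  have hpoint : ∀ A : Fin n → Finset (Fin m),
      Set.indicator {A | ∃ L : Finset (Fin m), L.card = ℓ ∧
          (ℓ:ℝ) * (n:ℝ) / (k:ℝ) ≤ ((Finset.univ.filter fun v => L ⊆ A v).card : ℝ)} W A
      ≤ ∑ L ∈ Finset.powersetCard ℓ (univ : Finset (Fin m)), Set.indicator (EL L) W A := by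
    intro A
    have hterm : ∀ L, 0 ≤ Set.indicator (EL L) W A := by
      intro L
      exact Set.indicator_nonneg (fun B _ => hWnn B) A
    by_cases hA : ∃ L : Finset (Fin m), L.card = ℓ ∧
        (ℓ:ℝ) * (n:ℝ) / (k:ℝ) ≤ ((Finset.univ.filter fun v => L ⊆ A v).card : ℝ)
    · obtain ⟨L₀, hL₀, hmem⟩ := hA
      rw [Set.indicator_apply, if_pos (Set.mem_setOf.mpr ⟨L₀, hL₀, hmem⟩)]
      have hL₀mem : L₀ ∈ Finset.powersetCard ℓ (univ : Finset (Fin m)) :=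
        Finset.mem_powersetCard_univ.mpr hL₀
      have h1 : Set.indicator (EL L₀) W A = W A := by
        rw [Set.indicator_apply, if_pos (show A ∈ EL L₀ from hmem)]
      calc W A = Set.indicator (EL L₀) W A := h1.symm
        _ ≤ ∑ L ∈ Finset.powersetCard ℓ (univ : Finset (Fin m)), Set.indicator (EL L) W A :=
          Finset.single_le_sum (fun L _ => hterm L) hL₀mem
    · rw [Set.indicator_apply, if_neg (show A ∉ _ from hA)]
      exact Finset.sum_nonneg fun L _ => hterm L
  calc erProb n m p _
      ≤ ∑ A : Fin n → Finset (Fin m),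
          ∑ L ∈ Finset.powersetCard ℓ (univ : Finset (Fin m)), Set.indicator (EL L) W A :=
        Finset.sum_le_sum fun A _ => hpoint A
    _ = ∑ L ∈ Finset.powersetCard ℓ (univ : Finset (Fin m)),
          ∑ A : Fin n → Finset (Fin m), Set.indicator (EL L) W A := Finset.sum_comm
    _ ≤ ∑ L ∈ Finset.powersetCard ℓ (univ : Finset (Fin m)),
          Real.exp (-2 * ((ℓ:ℝ) / (k:ℝ) - p ^ ℓ) ^ 2 * (n:ℝ)) := by
        apply Finset.sum_le_sum
        intro L hLmem
        exact chernoff_L n m k ℓ p hp0 hp1 (le_of_lt hpl) L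
          (Finset.mem_powersetCard_univ.mp hLmem)
    _ = (Nat.choose m ℓ : ℝ) * Real.exp (-2 * ((ℓ:ℝ) / (k:ℝ) - p ^ ℓ) ^ 2 * (n:ℝ)) := by
        rw [Finset.sum_const, Finset.card_powersetCard, Finset.card_univ, Fintype.card_fin,
          nsmul_eq_mul]
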